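/- For any real numbers a_1,…,a_n and A_1,…,A_n, and any index k with 2 ≤ k ≤ n+1, the determinant of the n×n matrix obtained from the E_n-matrix by deleting its k-th row and k-th column equals ∏_{m ≠ k−1} (A_m − a_m²), where the product is over m ∈ {1,…,n} with m ≠ k−1. -/
import Mathlib


open Finset

/-- The `E_n`-matrix generated by `a_1,…,a_n` and `A_1,…,A_n`. -/
def Emat {n : ℕ} (a A : Fin n → ℝ) : Matrix (Fin (n + 1)) (Fin (n + 1)) ℝ :=
  Matrix.of fun i j =>
    Fin.cases
      (Fin.cases (1 : ℝ) (fun j' => a j') j)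
      (fun i' => Fin.cases (a i') (fun j' => if i' = j' then A i' else a i' * a j') j)
      i

/-- The determinant of the full `E_n`-matrix. -/
lemma Emat_det {n : ℕ} (a A : Fin n → ℝ) :
    (Emat a A).det = ∏ i : Fin n, (A i - a i ^ 2) := by
  classical
  set L : Matrix (Fin (n + 1)) (Fin (n + 1)) ℝ :=
    Matrix.of fun i j =>
      Fin.cases (if j = 0 then (1 : ℝ) else 0)
        (fun i' => if j = 0 then a i' else if j = i'.succ then 1 else 0) i with hL
  set U : Matrix (Fin (n + 1)) (Fin (n + 1)) ℝ :=
    Matrix.of fun i j =>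
      Fin.cases (Fin.cases (1 : ℝ) (fun j' => a j') j)
        (fun i' => if j = i'.succ then A i' - a i' ^ 2 else 0) i with hU
  have hmul : Emat a A = L * U := by
    ext i j
    rw [Matrix.mul_apply]
    induction i using Fin.cases with
    | zero =>
      simp [hL, hU, Emat]
    | succ i' =>
      rw [Fin.sum_univ_succ]
      have h2 : ∀ x : Fin n, L i'.succ x.succ * U x.succ j
          = if x = i' then U i'.succ j else 0 := by
        intro x
        simp only [hL, Matrix.of_apply, Fin.cases_succ, Fin.succ_ne_zero, if_false,
          Fin.succ_inj]
        by_cases h : x = i' <;> simp [h]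
      rw [Finset.sum_congr rfl fun x _ => h2 x, Finset.sum_ite_eq' Finset.univ i' _,
        if_pos (Finset.mem_univ _)]
      induction j using Fin.cases with
      | zero =>
        simp [hL, hU, Emat]
        exact fun h => absurd h.symm (Fin.succ_ne_zero i')
      | succ j' =>
        simp only [hL, hU, Emat, Matrix.of_apply, Fin.cases_succ, Fin.succ_ne_zero, if_false,
          Fin.succ_inj]
        by_cases h : i' = j'
        · subst h; simp; ring
        · simp [h, Ne.symm h]
  have hLdet : L.det = 1 := by
    rw [Matrix.det_of_lowerTriangular L]
    · apply Finset.prod_eq_one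
      intro i _
      induction i using Fin.cases with
      | zero => simp [hL]
      | succ i' => simp [hL, Fin.succ_ne_zero]
    · intro i j hij
      induction i using Fin.cases with
      | zero =>
        have : j ≠ 0 := by
          intro h; subst h; exact absurd hij (by simp)
        simp [hL, this]
      | succ i' =>
        have h1 : j ≠ 0 := by
          intro h; subst h
          exact absurd (OrderDual.toDual_lt_toDual.mp hij) (Fin.not_lt_zero _)
        have h2 : j ≠ i'.succ := by
          intro h; subst h; exact lt_irrefl _ hij
        simp [hL, h1, h2]
  have hUdet : U.det = ∏ i : Fin n, (A i - a i ^ 2) := by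
    rw [Matrix.det_of_upperTriangular]
    · rw [Fin.prod_univ_succ]
      simp [hU]
    · intro i j hij
      induction i using Fin.cases with
      | zero => exact absurd hij (by simp [Fin.zero_le])
      | succ i' =>
        have h2 : j ≠ i'.succ := by
          intro h; subst h; exact lt_irrefl _ hij
        simp [hU, h2]
  rw [hmul, Matrix.det_mul, hLdet, hUdet, one_mul]

/-- Deleting row and column `k+1` from the `E_{m+1}`-matrix gives the `E_m`-matrix of the
restricted data. -/
lemma Emat_submatrix {m : ℕ} (a A : Fin (m + 1) → ℝ) (k : Fin (m + 1)) :
    (Emat a A).submatrix k.succ.succAbove k.succ.succAbove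
      = Emat (a ∘ k.succAbove) (A ∘ k.succAbove) := by
  ext i j
  simp only [Matrix.submatrix_apply]
  induction i using Fin.cases with
  | zero =>
    rw [Fin.succ_succAbove_zero]
    induction j using Fin.cases with
    | zero => simp [Emat]
    | succ j' => rw [Fin.succ_succAbove_succ]; simp [Emat]
  | succ i' =>
    rw [Fin.succ_succAbove_succ]
    induction j using Fin.cases with
    | zero => rw [Fin.succ_succAbove_zero]; simp [Emat]
    | succ j' =>
      rw [Fin.succ_succAbove_succ]
      simp only [Emat, Matrix.of_apply, Fin.cases_succ, Function.comp_apply]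
      simp only [(Fin.succAbove_right_injective (p := k)).eq_iff]

lemma prod_erase_eq_prod_succAbove {M : Type*} [CommMonoid M] {m : ℕ} (k : Fin (m + 1))
    (f : Fin (m + 1) → M) :
    ∏ j ∈ Finset.univ.erase k, f j = ∏ i : Fin m, f (k.succAbove i) := by
  rw [Fin.univ_succAbove m k, Finset.erase_cons, Finset.prod_map]
  rfl

/-- For `2 ≤ k ≤ n+1` (here `k` is `k'.succ` with `1 ≤ k' ≤ n`, i.e. `k' : Fin n` in 0-based
indexing), the determinant of the `n×n` matrix obtained from the `E_n`-matrix by deleting its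
`k`-th row and `k`-th column equals `∏_{m ≠ k−1} (A_m − a_m²)`. -/
theorem Emat_minor_det {n : ℕ} (a A : Fin n → ℝ) (k : Fin n) :
    ((Emat a A).submatrix k.succ.succAbove k.succ.succAbove).det =
      ∏ m ∈ Finset.univ.erase k, (A m - a m ^ 2) := by
  cases n with
  | zero => exact k.elim0
  | succ m =>
    rw [Emat_submatrix, Emat_det, prod_erase_eq_prod_succAbove]
    rfl
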